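/- Let n ∈ ℕ with n ≥ 2, let H ∈ [0,∞), let ε ∈ (0,1), and set E = 4·(n−1)·H/ε². For every Borel probability measure F on [0,∞)^n with F(EU_H^n) = 1, and for every IR menu M equipped with a choice function t, there exist an E-exclusive IR menu M′ and a choice function t′ for M′ such that Rev_{M′,t′}(F) ≥ (1 − ε) · Rev_{M,t}(F). -/

import Mathlib

open MeasureTheory ProbabilityTheory Set
open scoped NNReal ENNReal

noncomputable section

/-- The space of buyer types for `n` items: vectors in `[0,∞)^n`. -/
abbrev BuyerType (n : ℕ) := Fin n → ℝ≥0

/-- An `n`-item outcome: allocation probabilities together with a price. -/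
abbrev Outcome (n : ℕ) := (Fin n → ℝ) × ℝ

/-- An outcome is valid if all allocation probabilities are in `[0,1]` and the price is `≥ 0`. -/
def ValidOutcome {n : ℕ} (e : Outcome n) : Prop :=
  (∀ i, 0 ≤ e.1 i ∧ e.1 i ≤ 1) ∧ 0 ≤ e.2

/-- The zero entry `(0,…,0;0)`. -/
def zeroEntry (n : ℕ) : Outcome n := (fun _ => 0, 0)

/-- The utility of buyer type `v` from outcome `e`. -/
def utility {n : ℕ} (e : Outcome n) (v : BuyerType n) : ℝ :=
  (∑ i, e.1 i * (v i : ℝ)) - e.2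

/-- An individually rational menu: a set of valid outcomes containing the zero entry. -/
def IRMenu {n : ℕ} (M : Set (Outcome n)) : Prop :=
  (∀ e ∈ M, ValidOutcome e) ∧ zeroEntry n ∈ M

/-- A choice function for menu `M`: for every buyer type it picks a utility-maximizing
entry of maximal price among the utility-maximizing entries, with Borel-measurable price. -/
def IsChoice {n : ℕ} (M : Set (Outcome n)) (t : BuyerType n → Outcome n) : Prop :=
  (∀ v, t v ∈ M) ∧
  (∀ v, ∀ e ∈ M, utility e v ≤ utility (t v) v) ∧
  (∀ v, ∀ e ∈ M, utility e v = utility (t v) v → e.2 ≤ (t v).2) ∧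
  Measurable fun v => (t v).2

/-- The revenue of a menu equipped with choice function `t` from distribution `F`. -/
def revenue {n : ℕ} (t : BuyerType n → Outcome n) (F : Measure (BuyerType n)) : ℝ≥0∞ :=
  ∫⁻ v, ENNReal.ofReal ((t v).2) ∂F

/-- The menu size: the number of entries other than the zero entry. -/
def menuSize {n : ℕ} (M : Set (Outcome n)) : ℕ∞ :=
  (M \ {zeroEntry n}).encard

/-- The optimal revenue obtainable from `F` by an IR menu with a choice function. -/
def Rev {n : ℕ} (F : Measure (BuyerType n)) : ℝ≥0∞ :=
  ⨆ (Mt : Set (Outcome n) × (BuyerType n → Outcome n))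
    (_ : IRMenu Mt.1 ∧ IsChoice Mt.1 Mt.2), revenue Mt.2 F

/-- The optimal revenue obtainable from `F` by an IR menu of menu size at most `C`. -/
def RevC {n : ℕ} (C : ℕ) (F : Measure (BuyerType n)) : ℝ≥0∞ :=
  ⨆ (Mt : Set (Outcome n) × (BuyerType n → Outcome n))
    (_ : IRMenu Mt.1 ∧ IsChoice Mt.1 Mt.2 ∧ menuSize Mt.1 ≤ (C : ℕ∞)),
    revenue Mt.2 F

/-- Embedding of a single item value as a buyer type for one item. -/
def toOne (x : ℝ≥0) : BuyerType 1 := fun _ => x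

/-- The optimal single-item revenue from a value distribution `G` on `[0,∞)`. -/
def Rev1 (G : Measure ℝ≥0) : ℝ≥0∞ := Rev (G.map toOne)

/-- `EU n H`: the set of buyer types with at most one coordinate strictly greater than `H`. -/
def EU (n : ℕ) (H : ℝ) : Set (BuyerType n) :=
  {v | {i : Fin n | H < (v i : ℝ)}.Subsingleton}

/-- A menu is `E`-exclusive if every entry priced above `E` allocates at most one item with
positive probability. -/
def Exclusive {n : ℕ} (E : ℝ) (M : Set (Outcome n)) : Prop :=
  ∀ e ∈ M, E < e.2 → {i : Fin n | 0 < e.1 i}.Subsingleton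


lemma utility_zeroEntry {n : ℕ} (v : BuyerType n) : utility (zeroEntry n) v = 0 := by
  simp [utility, zeroEntry]

lemma continuous_utility {n : ℕ} (w : BuyerType n) :
    Continuous fun e : Outcome n => utility e w := by
  unfold utility
  exact (continuous_finset_sum _ fun i _ =>
    ((continuous_apply i).comp continuous_fst).mul continuous_const).sub continuous_snd

lemma measurable_utility {n : ℕ} (e : Outcome n) :
    Measurable fun v : BuyerType n => utility e v := by
  unfold utility
  refine Measurable.sub ?_ measurable_const
  exact Finset.measurable_sum _ fun i _ =>
    (measurable_coe_nnreal_real.comp (measurable_pi_apply i)).const_mul _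

lemma utility_le_sub {n : ℕ} {e : Outcome n} (he : ValidOutcome e) (v : BuyerType n) :
    utility e v ≤ (∑ i, (v i : ℝ)) - e.2 := by
  unfold utility
  have : (∑ i, e.1 i * (v i : ℝ)) ≤ ∑ i, (v i : ℝ) := by
    refine Finset.sum_le_sum fun i _ => ?_
    exact mul_le_of_le_one_left (v i).coe_nonneg (he.1 i).2
  linarith

/-- Existence of a price-maximal utility maximizer over a closed valid menu. -/
lemma exists_max {n : ℕ} {M' : Set (Outcome n)} (hcl : IsClosed M')
    (hval : ∀ e ∈ M', ValidOutcome e) (hne : M'.Nonempty) (v : BuyerType n) :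
    ∃ e ∈ M', (∀ f ∈ M', utility f v ≤ utility e v) ∧
      (∀ f ∈ M', utility f v = utility e v → f.2 ≤ e.2) := by
  obtain ⟨e₀, he₀⟩ := hne
  set V : ℝ := ∑ i, (v i : ℝ) with hV
  have hub : ∀ f ∈ M', utility f v ≤ V - f.2 := fun f hf => utility_le_sub (hval f hf) v
  set L : ℝ := utility e₀ v with hL
  set R : ℝ := V - L + 1 with hR
  have hcompact : ∀ R' : ℝ, IsCompact ((univ.pi fun _ : Fin n => Icc (0:ℝ) 1) ×ˢ Icc (0:ℝ) R') :=
    fun R' => (isCompact_univ_pi fun _ => isCompact_Icc).prod isCompact_Icc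
  set B : Set (Outcome n) := M' ∩ {e | e.2 ≤ R} with hB
  have hBsub : B ⊆ (univ.pi fun _ : Fin n => Icc (0:ℝ) 1) ×ˢ Icc (0:ℝ) R := by
    rintro f ⟨hf, hfR⟩
    have hvf := hval f hf
    exact ⟨fun i _ => ⟨(hvf.1 i).1, (hvf.1 i).2⟩, hvf.2, hfR⟩
  have hBclosed : IsClosed B := hcl.inter (isClosed_le continuous_snd continuous_const)
  have hBcompact : IsCompact B := (hcompact R).of_isClosed_subset hBclosed hBsub
  have he₀B : e₀ ∈ B := by
    refine ⟨he₀, ?_⟩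
    have := hub e₀ he₀
    simp only [mem_setOf_eq]
    rw [hR]; linarith
  obtain ⟨eb, hebB, hebmax⟩ := hBcompact.exists_isMaxOn ⟨e₀, he₀B⟩
    ((continuous_utility v).continuousOn)
  have hglob : ∀ f ∈ M', utility f v ≤ utility eb v := by
    intro f hf
    by_cases hfR : f.2 ≤ R
    · exact hebmax ⟨hf, hfR⟩
    · have h1 := hub f hf
      have h2 : L ≤ utility eb v := hebmax he₀B
      push_neg at hfR
      have : utility f v ≤ V - f.2 := h1
      rw [hR] at hfR
      linarith
  set A : Set (Outcome n) := M' ∩ {f | utility f v = utility eb v} with hA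
  have hAsubB : A ⊆ B := by
    rintro f ⟨hf, hfu⟩
    refine ⟨hf, ?_⟩
    have h1 := hub f hf
    have h2 : L ≤ utility eb v := hebmax he₀B
    simp only [mem_setOf_eq] at hfu ⊢
    rw [hR]; linarith [hfu ▸ h1]
  have hAclosed : IsClosed A := hcl.inter (isClosed_eq (continuous_utility v) continuous_const)
  have hAcompact : IsCompact A := hBcompact.of_isClosed_subset hAclosed hAsubB
  have hAne : A.Nonempty := ⟨eb, hebB.1, rfl⟩
  obtain ⟨e, heA, hemax⟩ := hAcompact.exists_isMaxOn hAne continuous_snd.continuousOn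
  refine ⟨e, heA.1, ?_, ?_⟩
  · intro f hf
    calc utility f v ≤ utility eb v := hglob f hf
    _ = utility e v := heA.2.symm
  · intro f hf hfu
    exact hemax (⟨hf, by rw [mem_setOf_eq, hfu, heA.2]⟩ : f ∈ A)


/-- A closed, valid, nonempty menu admits a choice function. -/
lemma exists_choice {n : ℕ} {M' : Set (Outcome n)} (hcl : IsClosed M')
    (hval : ∀ e ∈ M', ValidOutcome e) (hne : M'.Nonempty) :
    ∃ t', IsChoice M' t' := by
  choose t' ht'M ht'max ht'tie using exists_max hcl hval hne
  refine ⟨t', ht'M, ht'max, ht'tie, ?_⟩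
  -- countable dense sequence in M'
  obtain ⟨d, hd, hdense⟩ : ∃ d : ℕ → Outcome n,
      (∀ m, d m ∈ M') ∧ ∀ e ∈ M', e ∈ closure (Set.range d) := by
    have : Nonempty ↥M' := hne.to_subtype
    obtain ⟨s, hsc, hsd⟩ := TopologicalSpace.exists_countable_dense ↥M'
    obtain ⟨f, hf⟩ := hsc.exists_eq_range (hsd.nonempty)
    refine ⟨fun m => (f m : Outcome n), fun m => (f m).2, fun e he => ?_⟩
    have h1 : (⟨e, he⟩ : ↥M') ∈ closure s := hsd.closure_eq ▸ mem_univ _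
    rw [closure_subtype] at h1
    rw [hf, ← Set.range_comp] at h1
    exact h1
  -- approximating sequences towards any element of M'
  have happrox : ∀ e ∈ M', ∃ m : ℕ → ℕ, Filter.Tendsto (fun j => d (m j)) Filter.atTop (nhds e) := by
    intro e he
    obtain ⟨g, hgmem, hgt⟩ := mem_closure_iff_seq_limit.mp (hdense e he)
    choose m hm using hgmem
    exact ⟨m, by simpa [hm] using hgt⟩
  set c : ℕ → ℝ := fun k => 1 / (k + 1) with hc
  have hcpos : ∀ k, 0 < c k := fun k => by positivity
  have hcle1 : ∀ k, c k ≤ 1 := fun k => by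
    rw [hc]; rw [div_le_one (by positivity)]; linarith [Nat.cast_nonneg (α := ℝ) k]
  have hctend : Filter.Tendsto c Filter.atTop (nhds 0) := tendsto_one_div_add_atTop_nhds_zero_nat
  set Cond : ℕ → ℕ → BuyerType n → Prop :=
    fun m k v => ∀ m', utility (d m') v ≤ utility (d m) v + c k with hCond
  set Φ : BuyerType n → ℝ≥0∞ :=
    fun v => ⨅ (k : ℕ), ⨆ (m : ℕ),
      ({v' | Cond m k v'}.indicator (fun _ => ENNReal.ofReal ((d m).2)) v) with hΦ
  have key : ∀ v, Φ v = ENNReal.ofReal ((t' v).2) := by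
    intro v
    set S : ℝ := utility (t' v) v with hS
    set P : ℝ := (t' v).2 with hP
    have hP0 : 0 ≤ P := (hval _ (ht'M v)).2
    set V : ℝ := ∑ i, (v i : ℝ) with hV
    have hDle : ∀ m, utility (d m) v ≤ S := fun m => ht'max v _ (hd m)
    have hCiff : ∀ m k, Cond m k v ↔ S ≤ utility (d m) v + c k := by
      intro m k
      constructor
      · intro h
        obtain ⟨ms, hms⟩ := happrox (t' v) (ht'M v)
        have hut : Filter.Tendsto (fun j => utility (d (ms j)) v) Filter.atTop (nhds S) :=
          ((continuous_utility v).tendsto _).comp hms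
        exact le_of_tendsto' hut (fun j => h (ms j))
      · intro h m'
        exact le_trans (hDle m') h
    -- some index always satisfies Cond
    have hCex : ∀ k, ∃ m, Cond m k v := by
      intro k
      obtain ⟨ms, hms⟩ := happrox (t' v) (ht'M v)
      have hut : Filter.Tendsto (fun j => utility (d (ms j)) v) Filter.atTop (nhds S) :=
        ((continuous_utility v).tendsto _).comp hms
      have := (hut.eventually (eventually_gt_nhds (by linarith [hcpos k] : S - c k < S))).exists
      obtain ⟨j, hj⟩ := this
      exact ⟨ms j, (hCiff _ k).mpr (by linarith)⟩
    -- price bound for Cond indices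
    have hprice : ∀ k m, Cond m k v → (d m).2 ≤ V - S + 1 := by
      intro k m hCm
      have h1 := (hCiff m k).mp hCm
      have h2 := utility_le_sub (hval _ (hd m)) v
      have h3 := hcle1 k
      rw [← hV] at h2
      linarith
    refine le_antisymm ?_ ?_
    · -- Φ v ≤ ofReal P
      have hpick : ∀ k, ∃ m, Cond m k v ∧
          (⨆ (m' : ℕ), ({v' | Cond m' k v'}.indicator (fun _ => ENNReal.ofReal ((d m').2)) v))
            ≤ ({v' | Cond m k v'}.indicator (fun _ => ENNReal.ofReal ((d m).2)) v)
              + ENNReal.ofReal (c k) := by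
        intro k
        obtain ⟨m₁, hm₁⟩ := hCex k
        set Q : ℝ≥0∞ := ⨆ (m' : ℕ),
          ({v' | Cond m' k v'}.indicator (fun _ => ENNReal.ofReal ((d m').2)) v) with hQ
        have hQtop : Q ≠ ⊤ := by
          refine ne_top_of_le_ne_top (b := ENNReal.ofReal (V - S + 1)) ENNReal.ofReal_ne_top ?_
          refine iSup_le fun m' => ?_
          by_cases hC : Cond m' k v
          · rw [Set.indicator_of_mem (show v ∈ {v' | Cond m' k v'} from hC)]
            exact ENNReal.ofReal_le_ofReal (hprice k m' hC)
          · rw [Set.indicator_of_notMem (show v ∉ {v' | Cond m' k v'} from hC)]; exact zero_le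
        have hη : (0:ℝ≥0∞) < ENNReal.ofReal (c k) := ENNReal.ofReal_pos.mpr (hcpos k)
        by_cases hQ0 : Q ≤ ENNReal.ofReal (c k)
        · refine ⟨m₁, hm₁, le_trans hQ0 (le_add_self)⟩
        · push_neg at hQ0
          have hQne : Q ≠ 0 := by intro h; rw [h] at hQ0; exact absurd hQ0 (by simp)
          have hsub : Q - ENNReal.ofReal (c k) < Q := ENNReal.sub_lt_self hQtop hQne (by positivity)
          rw [hQ] at hsub
          obtain ⟨m, hm⟩ := lt_iSup_iff.mp hsub
          have hCm : Cond m k v := by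
            by_contra hC
            rw [Set.indicator_of_notMem (show v ∉ {v' | Cond m k v'} from hC)] at hm
            exact absurd hm (by simp)
          exact ⟨m, hCm, tsub_le_iff_right.mp hm.le⟩
      choose mk hCk hQk using hpick
      set ek : ℕ → Outcome n := fun k => d (mk k) with hek
      have hmem : ∀ k, ek k ∈ (univ.pi fun _ : Fin n => Icc (0:ℝ) 1) ×ˢ Icc (0:ℝ) (V - S + 1) := by
        intro k
        have hvk := hval _ (hd (mk k))
        exact ⟨fun i _ => ⟨(hvk.1 i).1, (hvk.1 i).2⟩, hvk.2, hprice k (mk k) (hCk k)⟩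
      have hCpt : IsCompact ((univ.pi fun _ : Fin n => Icc (0:ℝ) 1) ×ˢ Icc (0:ℝ) (V - S + 1)) :=
        (isCompact_univ_pi fun _ => isCompact_Icc).prod isCompact_Icc
      obtain ⟨eb, _, φ, hφ, hφt⟩ := hCpt.tendsto_subseq hmem
      have hebM : eb ∈ M' := hcl.mem_of_tendsto hφt
        (Filter.Eventually.of_forall fun j => hd _)
      have hueb : utility eb v = S := by
        refine le_antisymm (ht'max v _ hebM) ?_
        have h1 : Filter.Tendsto (fun j => utility (ek (φ j)) v) Filter.atTop (nhds (utility eb v)) :=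
          ((continuous_utility v).tendsto _).comp hφt
        have h2 : Filter.Tendsto (fun j => S - c (φ j)) Filter.atTop (nhds (S - 0)) :=
          (tendsto_const_nhds.sub (hctend.comp hφ.tendsto_atTop))
        rw [sub_zero] at h2
        refine le_of_tendsto_of_tendsto' h2 h1 fun j => ?_
        have := (hCiff (mk (φ j)) (φ j)).mp (hCk (φ j))
        linarith
      have hebP : eb.2 ≤ P := ht'tie v eb hebM hueb
      have hlim : Filter.Tendsto (fun j => ENNReal.ofReal ((ek (φ j)).2) + ENNReal.ofReal (c (φ j)))
          Filter.atTop (nhds (ENNReal.ofReal eb.2 + 0)) := by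
        refine Filter.Tendsto.add ?_ ?_
        · exact (ENNReal.continuous_ofReal.tendsto _).comp (continuous_snd.tendsto _ |>.comp hφt)
        · have : Filter.Tendsto (fun j => c (φ j)) Filter.atTop (nhds 0) :=
            hctend.comp hφ.tendsto_atTop
          simpa [Function.comp_def] using (ENNReal.continuous_ofReal.tendsto 0).comp this
      rw [add_zero] at hlim
      have hΦle : ∀ j, Φ v ≤ ENNReal.ofReal ((ek (φ j)).2) + ENNReal.ofReal (c (φ j)) := by
        intro j
        refine le_trans (iInf_le _ (φ j)) (le_trans (hQk (φ j)) ?_)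
        rw [Set.indicator_of_mem (show v ∈ {v' | Cond (mk (φ j)) (φ j) v'} from hCk (φ j))]
      calc Φ v ≤ ENNReal.ofReal eb.2 := ge_of_tendsto' hlim hΦle |>.trans (le_refl _)
        _ ≤ ENNReal.ofReal P := ENNReal.ofReal_le_ofReal hebP
    · -- ofReal P ≤ Φ v
      refine le_iInf fun k => ?_
      obtain ⟨ms, hms⟩ := happrox (t' v) (ht'M v)
      have hut : Filter.Tendsto (fun j => utility (d (ms j)) v) Filter.atTop (nhds S) :=
        ((continuous_utility v).tendsto _).comp hms
      have hpt : Filter.Tendsto (fun j => (d (ms j)).2) Filter.atTop (nhds P) :=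
        (continuous_snd.tendsto _).comp hms
      refine ENNReal.le_of_forall_pos_le_add fun η hη _ => ?_
      have h1 : ∀ᶠ j in Filter.atTop, S - c k < utility (d (ms j)) v :=
        hut.eventually (eventually_gt_nhds (by linarith [hcpos k]))
      have h2 : ∀ᶠ j in Filter.atTop, P - η < (d (ms j)).2 :=
        hpt.eventually (eventually_gt_nhds (by
          have : (0:ℝ) < η := hη
          linarith))
      obtain ⟨j, hj1, hj2⟩ := (h1.and h2).exists
      have hCj : Cond (ms j) k v := (hCiff _ _).mpr (by linarith)
      have : ENNReal.ofReal ((d (ms j)).2) ≤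
          ⨆ (m : ℕ), ({v' | Cond m k v'}.indicator (fun _ => ENNReal.ofReal ((d m).2)) v) := by
        refine le_trans ?_ (le_iSup _ (ms j))
        rw [Set.indicator_of_mem (show v ∈ {v' | Cond (ms j) k v'} from hCj)]
      refine le_trans ?_ (add_le_add_left this _)
      have : P ≤ (d (ms j)).2 + η := by linarith [hj2]
      calc ENNReal.ofReal P ≤ ENNReal.ofReal ((d (ms j)).2 + η) := ENNReal.ofReal_le_ofReal this
        _ ≤ ENNReal.ofReal ((d (ms j)).2) + ENNReal.ofReal η := ENNReal.ofReal_add_le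
        _ = ENNReal.ofReal ((d (ms j)).2) + η := by rw [ENNReal.ofReal_coe_nnreal]
  -- measurability
  have hΦmeas : Measurable Φ := by
    refine Measurable.iInf fun k => Measurable.iSup fun m => ?_
    refine Measurable.indicator measurable_const ?_
    have : {v' | Cond m k v'} = ⋂ m', {v' | utility (d m') v' ≤ utility (d m) v' + c k} := by
      ext v'; simp [hCond, mem_iInter]
    rw [this]
    exact MeasurableSet.iInter fun m' =>
      measurableSet_le (measurable_utility _) ((measurable_utility _).add_const _)
  have : (fun v => (t' v).2) = fun v => (Φ v).toReal := by
    funext v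
    rw [key v, ENNReal.toReal_ofReal (hval _ (ht'M v)).2]
  rw [this]
  exact ENNReal.measurable_toReal.comp hΦmeas

set_option maxHeartbeats 2000000 in
/-- For any distribution supported on `EU_H^n` and any IR menu with a choice
function, there is an `E`-exclusive IR menu with a choice function, `E = 4(n-1)H/ε²`,
losing at most a `(1-ε)` multiplicative factor of the revenue. -/
theorem exclusive_menu_approximation
    (n : ℕ) (hn : 2 ≤ n) (H : ℝ) (hH : 0 ≤ H) (ε : ℝ) (hε0 : 0 < ε) (hε1 : ε < 1)
    (F : Measure (BuyerType n)) (hF : IsProbabilityMeasure F) (hFEU : F (EU n H) = 1)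
    (M : Set (Outcome n)) (t : BuyerType n → Outcome n)
    (hM : IRMenu M) (ht : IsChoice M t) :
    ∃ (M' : Set (Outcome n)) (t' : BuyerType n → Outcome n),
      IRMenu M' ∧ Exclusive (4 * ((n : ℝ) - 1) * H / ε ^ 2) M' ∧ IsChoice M' t' ∧
      ENNReal.ofReal (1 - ε) * revenue t F ≤ revenue t' F := by
  obtain ⟨htM, htmax, httie, htmeas⟩ := ht
  -- basic numeric facts
  set δ : ℝ := ε / 2 with hδ
  set E : ℝ := 4 * ((n : ℝ) - 1) * H / ε ^ 2 with hE
  have hn1 : (1:ℝ) ≤ (n:ℝ) - 1 := by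
    have : (2:ℝ) ≤ (n:ℝ) := by exact_mod_cast hn
    linarith
  have hA0 : 0 ≤ ((n:ℝ) - 1) * H := by nlinarith
  have hE0 : 0 ≤ E := by rw [hE]; positivity
  have hδpos : 0 < δ := by rw [hδ]; linarith
  have h1δ : 0 < 1 - δ := by rw [hδ]; linarith
  have hεE : E * ε ^ 2 = 4 * (((n:ℝ) - 1) * H) := by
    rw [hE]; field_simp
  have hEnH : (n:ℝ) * H ≤ E := by
    rw [hE, le_div_iff₀ (by positivity)]
    have hnH0 : (0:ℝ) ≤ (n:ℝ) * H := by positivity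
    have hε2 : ε ^ 2 ≤ 1 := by nlinarith
    nlinarith [mul_le_mul_of_nonneg_left hε2 hnH0, mul_nonneg (by linarith : (0:ℝ) ≤ 3 * (n:ℝ) - 4) hH]
  have hδEA : ((n:ℝ) - 1) * H ≤ δ * E := by
    have h1 : δ * E * ε ^ 2 = 2 * ε * (((n:ℝ)-1) * H) := by
      rw [hδ]; nlinarith [hεE]
    have h2 : (((n:ℝ) - 1) * H) * ε ^ 2 ≤ (δ * E) * ε ^ 2 := by
      rw [h1]
      nlinarith [mul_nonneg hA0 (mul_pos hε0 (by linarith : (0:ℝ) < 2 - ε)).le]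
    exact le_of_mul_le_mul_right h2 (by positivity : (0:ℝ) < ε ^ 2)
  -- the new menu
  set Khat : Set (Outcome n) :=
    {e | ValidOutcome e ∧ e.2 ≤ E ∧ ∀ w, utility e w ≤ utility (t w) w} with hKhat
  set Nhat : Fin n → Set (Outcome n) := fun i =>
    {e | (∀ j, j ≠ i → e.1 j = 0) ∧ (0 ≤ e.1 i ∧ e.1 i ≤ 1) ∧ (1 - δ) * E ≤ e.2 ∧
      ∀ w, e.1 i * (w i : ℝ) - e.2 / (1 - δ) ≤ utility (t w) w} with hNhat
  set M' : Set (Outcome n) := Khat ∪ ⋃ i, Nhat i with hM'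
  have hvalid : ∀ e ∈ M', ValidOutcome e := by
    rintro e (he | he)
    · exact he.1
    · obtain ⟨i, hi⟩ := mem_iUnion.mp he
      refine ⟨fun j => ?_, le_trans (by positivity) hi.2.2.1⟩
      by_cases hji : j = i
      · subst hji; exact hi.2.1
      · rw [hi.1 j hji]; exact ⟨le_refl _, zero_le_one⟩
  have hzeroK : zeroEntry n ∈ Khat := by
    refine ⟨⟨fun i => ⟨le_refl _, zero_le_one⟩, le_refl _⟩, hE0, fun w => ?_⟩
    rw [utility_zeroEntry]
    exact (utility_zeroEntry w) ▸ htmax w _ hM.2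
  have hM'ne : M'.Nonempty := ⟨_, Or.inl hzeroK⟩
  have hM'cl : IsClosed M' := by
    refine IsClosed.union ?_ (isClosed_iUnion_of_finite fun i => ?_)
    · have h1 : IsClosed {e : Outcome n | ValidOutcome e} := by
        have : {e : Outcome n | ValidOutcome e} =
            (⋂ i, {e : Outcome n | 0 ≤ e.1 i} ∩ {e : Outcome n | e.1 i ≤ 1}) ∩
              {e : Outcome n | 0 ≤ e.2} := by
          ext e; simp [ValidOutcome, forall_and]
        rw [this]
        refine IsClosed.inter (isClosed_iInter fun i => IsClosed.inter ?_ ?_) ?_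
        · exact isClosed_le continuous_const ((continuous_apply i).comp continuous_fst)
        · exact isClosed_le ((continuous_apply i).comp continuous_fst) continuous_const
        · exact isClosed_le continuous_const continuous_snd
      have h2 : IsClosed {e : Outcome n | e.2 ≤ E} := isClosed_le continuous_snd continuous_const
      have h3 : IsClosed {e : Outcome n | ∀ w, utility e w ≤ utility (t w) w} := by
        have : {e : Outcome n | ∀ w, utility e w ≤ utility (t w) w} =
            ⋂ w, {e : Outcome n | utility e w ≤ utility (t w) w} := by
          ext e; simp [mem_iInter]
        rw [this]
        exact isClosed_iInter fun w => isClosed_le (continuous_utility w) continuous_const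
      have : Khat = {e : Outcome n | ValidOutcome e} ∩ ({e : Outcome n | e.2 ≤ E} ∩
          {e : Outcome n | ∀ w, utility e w ≤ utility (t w) w}) := by
        ext e; simp [hKhat, mem_setOf_eq, and_assoc]
      rw [this]
      exact h1.inter (h2.inter h3)
    · have h1 : IsClosed {e : Outcome n | ∀ j, j ≠ i → e.1 j = 0} := by
        have : {e : Outcome n | ∀ j, j ≠ i → e.1 j = 0} =
            ⋂ j, ⋂ (_ : j ≠ i), {e : Outcome n | e.1 j = 0} := by
          ext e; simp [mem_iInter]
        rw [this]
        exact isClosed_iInter fun j => isClosed_iInter fun _ =>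
          isClosed_eq ((continuous_apply j).comp continuous_fst) continuous_const
      have h2 : IsClosed {e : Outcome n | 0 ≤ e.1 i ∧ e.1 i ≤ 1} :=
        IsClosed.inter (isClosed_le continuous_const ((continuous_apply i).comp continuous_fst))
          (isClosed_le ((continuous_apply i).comp continuous_fst) continuous_const)
      have h3 : IsClosed {e : Outcome n | (1 - δ) * E ≤ e.2} :=
        isClosed_le continuous_const continuous_snd
      have h4 : IsClosed {e : Outcome n | ∀ w, e.1 i * (w i : ℝ) - e.2 / (1 - δ) ≤ utility (t w) w} := by
        have : {e : Outcome n | ∀ w, e.1 i * (w i : ℝ) - e.2 / (1 - δ) ≤ utility (t w) w} =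
            ⋂ w, {e : Outcome n | e.1 i * (w i : ℝ) - e.2 / (1 - δ) ≤ utility (t w) w} := by
          ext e; simp [mem_iInter]
        rw [this]
        refine isClosed_iInter fun w => isClosed_le ?_ continuous_const
        exact (((continuous_apply i).comp continuous_fst).mul continuous_const).sub
          (continuous_snd.div_const _)
      have : Nhat i = {e : Outcome n | ∀ j, j ≠ i → e.1 j = 0} ∩
          ({e : Outcome n | 0 ≤ e.1 i ∧ e.1 i ≤ 1} ∩ ({e : Outcome n | (1 - δ) * E ≤ e.2} ∩
          {e : Outcome n | ∀ w, e.1 i * (w i : ℝ) - e.2 / (1 - δ) ≤ utility (t w) w})) := by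
        ext e; simp [hNhat, mem_setOf_eq, and_assoc]
      rw [this]
      exact h1.inter (h2.inter (h3.inter h4))
  obtain ⟨t', ht'M, ht'max, ht'tie, ht'meas⟩ := exists_choice hM'cl hvalid hM'ne
  -- utility formula in Nhat
  have hNutil : ∀ i, ∀ e ∈ Nhat i, ∀ v : BuyerType n, utility e v = e.1 i * (v i : ℝ) - e.2 := by
    intro i e he v
    unfold utility
    congr 1
    rw [Finset.sum_eq_single i]
    · intro j _ hji; rw [he.1 j hji, zero_mul]
    · intro h; exact absurd (Finset.mem_univ i) h
  -- pointwise revenue bound on EU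
  have hpoint : ∀ v ∈ EU n H, (1 - ε) * (t v).2 ≤ (t' v).2 := by
    intro v hv
    have hp0 : 0 ≤ (t v).2 := (hM.1 _ (htM v)).2
    have hU0 : 0 ≤ utility (t v) v := (utility_zeroEntry v) ▸ htmax v _ hM.2
    rcases le_or_gt (t v).2 E with hpE | hpE
    · -- low price case
      have htvK : t v ∈ M' := Or.inl ⟨hM.1 _ (htM v), hpE, fun w => htmax w _ (htM v)⟩
      rcases ht'M v with hK | hN
      · have h1 : utility (t' v) v ≤ utility (t v) v := hK.2.2 v
        have h2 : utility (t v) v ≤ utility (t' v) v := ht'max v _ htvK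
        have h3 : (t v).2 ≤ (t' v).2 := ht'tie v _ htvK (le_antisymm h2 h1)
        nlinarith
      · obtain ⟨i, hi⟩ := mem_iUnion.mp hN
        have h1 : (1 - δ) * E ≤ (t' v).2 := hi.2.2.1
        nlinarith
    · -- high price case
      set p : ℝ := (t v).2 with hp
      set U : ℝ := utility (t v) v with hU
      have hsum : U = (∑ i, (t v).1 i * (v i : ℝ)) - p := rfl
      -- there is a unique possibly-large coordinate
      have hex : ∃ i : Fin n, ∀ j, j ≠ i → (v j : ℝ) ≤ H := by
        rcases eq_empty_or_nonempty {i : Fin n | H < (v i : ℝ)} with hT | ⟨i0, hi0⟩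
        · exfalso
          have hall : ∀ j, (v j : ℝ) ≤ H := by
            intro j
            by_contra hj
            push_neg at hj
            exact absurd (hT ▸ hj : j ∈ (∅ : Set (Fin n))) (notMem_empty j)
          have h1 : (∑ i, (t v).1 i * (v i : ℝ)) ≤ ∑ i : Fin n, H := by
            refine Finset.sum_le_sum fun i _ => ?_
            calc (t v).1 i * (v i : ℝ) ≤ 1 * (v i : ℝ) :=
              mul_le_mul_of_nonneg_right ((hM.1 _ (htM v)).1 i).2 (v i).coe_nonneg
            _ = (v i : ℝ) := one_mul _
            _ ≤ H := hall i
          have h2 : (∑ i : Fin n, H) = (n:ℝ) * H := by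
            rw [Finset.sum_const, Finset.card_univ, Fintype.card_fin, nsmul_eq_mul]
          nlinarith [hsum ▸ hU0]
        · refine ⟨i0, fun j hj => ?_⟩
          by_contra hjh
          push_neg at hjh
          exact hj (hv hjh hi0)
      obtain ⟨i0, hi0⟩ := hex
      -- split sum
      have hsplit : (t v).1 i0 * (v i0 : ℝ) +
          (∑ j ∈ Finset.univ.erase i0, (t v).1 j * (v j : ℝ)) = ∑ j, (t v).1 j * (v j : ℝ) :=
        Finset.add_sum_erase Finset.univ (fun j => (t v).1 j * ((v j : ℝ))) (Finset.mem_univ i0)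
      have herase : (∑ j ∈ Finset.univ.erase i0, (t v).1 j * (v j : ℝ)) ≤ ((n:ℝ) - 1) * H := by
        have h1 : ∀ j ∈ Finset.univ.erase i0, (t v).1 j * (v j : ℝ) ≤ H := by
          intro j hj
          have hji := Finset.ne_of_mem_erase hj
          calc (t v).1 j * (v j : ℝ) ≤ 1 * (v j : ℝ) :=
            mul_le_mul_of_nonneg_right ((hM.1 _ (htM v)).1 j).2 (v j).coe_nonneg
          _ = (v j : ℝ) := one_mul _
          _ ≤ H := hi0 j hji
        calc (∑ j ∈ Finset.univ.erase i0, (t v).1 j * (v j : ℝ))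
            ≤ ∑ _j ∈ Finset.univ.erase i0, H := Finset.sum_le_sum h1
        _ = ((Finset.univ.erase i0).card : ℝ) * H := by rw [Finset.sum_const, nsmul_eq_mul]
        _ = ((n:ℝ) - 1) * H := by
            rw [Finset.card_erase_of_mem (Finset.mem_univ i0), Finset.card_univ, Fintype.card_fin]
            congr 1
            have : 1 ≤ n := by omega
            push_cast [Nat.cast_sub this]
            ring
      have hxv : U + p - ((n:ℝ) - 1) * H ≤ (t v).1 i0 * (v i0 : ℝ) := by
        linarith [hsplit, herase, hsum]
      -- the exclusive competitor entry
      set g : Outcome n := (fun j => if j = i0 then (t v).1 i0 else 0, (1 - δ) * p) with hg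
      have hgN : g ∈ Nhat i0 := by
        refine ⟨fun j hj => if_neg hj, ?_, ?_, ?_⟩
        · rw [hg]; simp only [if_pos rfl]
          exact ⟨((hM.1 _ (htM v)).1 i0).1, ((hM.1 _ (htM v)).1 i0).2⟩
        · exact mul_le_mul_of_nonneg_left hpE.le h1δ.le
        · intro w
          have hcancel : ((1 - δ) * p) / (1 - δ) = p := by
            field_simp
          simp only [hg, if_pos rfl, hcancel]
          have h1 : (t v).1 i0 * (w i0 : ℝ) ≤ ∑ j, (t v).1 j * (w j : ℝ) := by
            refine Finset.single_le_sum (f := fun j => (t v).1 j * (w j : ℝ)) ?_ (Finset.mem_univ i0)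
            intro j _
            exact mul_nonneg ((hM.1 _ (htM v)).1 j).1 (w j).coe_nonneg
          calc (t v).1 i0 * (w i0 : ℝ) - p ≤ (∑ j, (t v).1 j * (w j : ℝ)) - p := by linarith
          _ = utility (t v) w := rfl
          _ ≤ utility (t w) w := htmax w _ (htM v)
      have hgM' : g ∈ M' := Or.inr (mem_iUnion.mpr ⟨i0, hgN⟩)
      have hug : utility g v = (t v).1 i0 * (v i0 : ℝ) - (1 - δ) * p := by
        rw [hNutil i0 g hgN v, hg]
        simp
      have hδpA : 0 < δ * p - ((n:ℝ) - 1) * H := by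
        have h1 : δ * E < δ * p := by exact mul_lt_mul_of_pos_left hpE hδpos
        linarith
      have hgeU : U + (δ * p - ((n:ℝ) - 1) * H) ≤ utility g v := by
        rw [hug]; nlinarith [hxv]
      have hu' : utility g v ≤ utility (t' v) v := ht'max v _ hgM'
      rcases ht'M v with hK | hN
      · exfalso
        have := hK.2.2 v
        rw [← hU] at this
        linarith
      · obtain ⟨i, hi⟩ := mem_iUnion.mp hN
        by_cases hii : i = i0
        · subst hii
          -- main derivation
          set y : ℝ := (t' v).1 i with hy
          set r : ℝ := (t' v).2 with hr
          have hdom : y * (v i : ℝ) - r / (1 - δ) ≤ U := hi.2.2.2 v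
          have hutv : utility (t' v) v = y * (v i : ℝ) - r := hNutil i _ hi v
          have hu2 : U + (δ * p - ((n:ℝ) - 1) * H) ≤ y * (v i : ℝ) - r := by
            rw [← hutv]; linarith
          set q : ℝ := r / (1 - δ) with hq
          have hrq : r = q * (1 - δ) := by
            rw [hq, div_mul_cancel₀ _ (ne_of_gt h1δ)]
          have hqδ : δ * p - ((n:ℝ) - 1) * H ≤ q * δ := by
            have : q - r = q * δ := by rw [hrq]; ring
            linarith [hdom, hu2]
          -- final arithmetic: (1-ε) p ≤ r
          have hr0 : 0 ≤ r := le_trans (by positivity) hi.2.2.1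
          have hpεsq : 4 * (((n:ℝ) - 1) * H) ≤ p * ε ^ 2 := by
            have h1 : E * ε ^ 2 ≤ p * ε ^ 2 :=
              mul_le_mul_of_nonneg_right hpE.le (by positivity)
            linarith [hεE]
          have hq0 : 0 ≤ q := by positivity
          rw [hrq]
          have hδe : δ = ε / 2 := rfl
          nlinarith [hqδ, hpεsq, hA0, mul_nonneg hq0 hε0.le, sq_nonneg ε,
            mul_nonneg hA0 hε0.le, mul_nonneg hp0 hε0.le]
        · exfalso
          have hvi : (v i : ℝ) ≤ H := hi0 i hii
          have hutv : utility (t' v) v = (t' v).1 i * (v i : ℝ) - (t' v).2 := hNutil i _ hi v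
          have h1 : (t' v).1 i * (v i : ℝ) ≤ H := by
            calc (t' v).1 i * (v i : ℝ) ≤ 1 * (v i : ℝ) :=
              mul_le_mul_of_nonneg_right hi.2.1.2 (v i).coe_nonneg
            _ = (v i : ℝ) := one_mul _
            _ ≤ H := hvi
          have h2 : (1 - δ) * E ≤ (t' v).2 := hi.2.2.1
          have h3 : utility (t' v) v ≤ H - (1 - δ) * E := by rw [hutv]; linarith
          have h4 : δ * E < δ * p := mul_lt_mul_of_pos_left hpE hδpos
          -- need: δ p - (n-1)H > H - (1-δ)E, using E ≥ nH
          have h5 : ((n:ℝ) - 1) * H + H ≤ E := by nlinarith [hEnH]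
          linarith [hgeU, hu', hδpA]
  -- measurability of EU and a.e. bound
  have hEUmeas : MeasurableSet (EU n H) := by
    have : EU n H = ⋂ i, ⋂ j, ⋂ (_ : i ≠ j),
        ({v : BuyerType n | (v i : ℝ) ≤ H} ∪ {v : BuyerType n | (v j : ℝ) ≤ H}) := by
      ext v
      simp only [EU, mem_setOf_eq, mem_iInter, mem_union]
      constructor
      · intro hsub i j hij
        by_contra hc
        push_neg at hc
        exact hij (hsub hc.1 hc.2)
      · intro h a ha b hb
        by_contra hab
        rcases h a b hab with h1 | h1
        · exact absurd ha (not_lt_of_ge h1)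
        · exact absurd hb (not_lt_of_ge h1)
    rw [this]
    refine MeasurableSet.iInter fun i => MeasurableSet.iInter fun j =>
      MeasurableSet.iInter fun _ => MeasurableSet.union ?_ ?_
    · exact measurableSet_le (measurable_coe_nnreal_real.comp (measurable_pi_apply i))
        measurable_const
    · exact measurableSet_le (measurable_coe_nnreal_real.comp (measurable_pi_apply j))
        measurable_const
  have hae : ∀ᵐ v ∂F, (1 - ε) * (t v).2 ≤ (t' v).2 := by
    have hcompl : F (EU n H)ᶜ = 0 := by
      rw [measure_compl hEUmeas (measure_ne_top F _), hFEU, hF.measure_univ, tsub_self]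
    refine (ae_iff).mpr (measure_mono_null ?_ hcompl)
    intro v hv
    simp only [mem_setOf_eq] at hv
    simp only [mem_compl_iff]
    intro hmem
    exact hv (hpoint v hmem)
  -- conclude
  refine ⟨M', t', ⟨hvalid, Or.inl hzeroK⟩, ?_, ⟨ht'M, ht'max, ht'tie, ht'meas⟩, ?_⟩
  · rintro e (heK | heN) hpe
    · exact absurd hpe (not_lt_of_ge heK.2.1)
    · obtain ⟨i, hi⟩ := mem_iUnion.mp heN
      intro a ha b hb
      simp only [mem_setOf_eq] at ha hb
      have ha' : a = i := by
        by_contra hc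
        rw [hi.1 a hc] at ha
        exact absurd ha (lt_irrefl 0)
      have hb' : b = i := by
        by_contra hc
        rw [hi.1 b hc] at hb
        exact absurd hb (lt_irrefl 0)
      rw [ha', hb']
  · have hmeas : Measurable fun v => ENNReal.ofReal ((t v).2) := htmeas.ennreal_ofReal
    calc ENNReal.ofReal (1 - ε) * revenue t F
        = ∫⁻ v, ENNReal.ofReal (1 - ε) * ENNReal.ofReal ((t v).2) ∂F :=
          (lintegral_const_mul _ hmeas).symm
      _ ≤ ∫⁻ v, ENNReal.ofReal ((t' v).2) ∂F := by
          refine lintegral_mono_ae (hae.mono fun v h => ?_)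
          rw [← ENNReal.ofReal_mul (by linarith)]
          exact ENNReal.ofReal_le_ofReal h
      _ = revenue t' F := rfl

end
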